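/- Let p_n/q_n = [0; a_1, ..., a_n] and r_m/s_m = [0; b_1, ..., b_m] be continued fraction convergents (with a_i, b_i positive integers, a_n, b_m ≥ 1). If q_n = s_m and q_{n−1} = s_{m−1}, then either m = n and a_j = b_j for all 1 ≤ j ≤ n, or m = n+1 with a_1 ≥ 2 and (b_1, ..., b_{n+1}) = (1, a_1 − 1, a_2, ..., a_n), or m + 1 = n with b_1 ≥ 2 and (a_1, ..., a_{m+1}) = (1, b_1 − 1, b_2, ..., b_m). -/
import Mathlib


/-- Denominators of the convergents of the continued fraction [0; a 1, a 2, ...],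
where `a i` is the i-th partial quotient (indexed from 1):
q_0 = 1, q_1 = a_1, q_{n+2} = a_{n+2} q_{n+1} + q_n. -/
def den (a : ℕ → ℤ) : ℕ → ℤ
  | 0 => 1
  | 1 => a 1
  | n + 2 => a (n + 2) * den a (n + 1) + den a n

lemma den_pos (a : ℕ → ℤ) (n : ℕ) (ha : ∀ i, 1 ≤ i → i ≤ n → 1 ≤ a i) :
    ∀ k, k ≤ n → 1 ≤ den a k := by
  intro k
  induction k using Nat.strong_induction_on with
  | _ k IH =>
    match k with
    | 0 => intro _; simp [den]
    | 1 => intro h; simpa [den] using ha 1 le_rfl h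
    | k + 2 =>
      intro h
      have h1 : 1 ≤ den a (k + 1) := IH (k + 1) (by omega) (by omega)
      have h0 : 1 ≤ den a k := IH k (by omega) (by omega)
      have hA : 1 ≤ a (k + 2) := ha (k + 2) (by omega) h
      show 1 ≤ a (k + 2) * den a (k + 1) + den a k
      nlinarith

lemma den_mono (a : ℕ → ℤ) (n : ℕ) (ha : ∀ i, 1 ≤ i → i ≤ n → 1 ≤ a i) :
    ∀ k, k + 1 ≤ n → den a k ≤ den a (k + 1) := by
  intro k hk
  match k with
  | 0 => simpa [den] using ha 1 le_rfl hk
  | k + 1 =>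
    have h1 : 1 ≤ den a (k + 1) := den_pos a n ha (k + 1) (by omega)
    have h0 : 1 ≤ den a k := den_pos a n ha k (by omega)
    have hA : 1 ≤ a (k + 2) := ha (k + 2) (by omega) hk
    show den a (k + 1) ≤ a (k + 2) * den a (k + 1) + den a k
    nlinarith

lemma den_two_le (a : ℕ → ℤ) (n : ℕ) (ha : ∀ i, 1 ≤ i → i ≤ n → 1 ≤ a i)
    (k : ℕ) (hk2 : 2 ≤ k) (hk : k ≤ n) : 2 ≤ den a k := by
  match k with
  | k + 2 =>
    have h1 : 1 ≤ den a (k + 1) := den_pos a n ha (k + 1) (by omega)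
    have h0 : 1 ≤ den a k := den_pos a n ha k (by omega)
    have hA : 1 ≤ a (k + 2) := ha (k + 2) (by omega) hk
    show 2 ≤ a (k + 2) * den a (k + 1) + den a k
    nlinarith

/-- Hilfssatz 3 (i). -/
theorem hilfssatz3_i (a b : ℕ → ℤ) (n m : ℕ)
    (ha : ∀ i, 1 ≤ i → i ≤ n → 1 ≤ a i) (hb : ∀ i, 1 ≤ i → i ≤ m → 1 ≤ b i)
    (hn : 1 ≤ n) (hm : 1 ≤ m)
    (h1 : den a n = den b m) (h2 : den a (n - 1) = den b (m - 1)) :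
    (m = n ∧ ∀ j, 1 ≤ j → j ≤ n → a j = b j) ∨
    (m = n + 1 ∧ 2 ≤ a 1 ∧ b 1 = 1 ∧ b 2 = a 1 - 1 ∧
      ∀ j, 2 ≤ j → j ≤ n → b (j + 1) = a j) ∨
    (m + 1 = n ∧ 2 ≤ b 1 ∧ a 1 = 1 ∧ a 2 = b 1 - 1 ∧
      ∀ j, 2 ≤ j → j ≤ m → a (j + 1) = b j) := by
  induction n using Nat.strong_induction_on generalizing m with
  | _ n IH =>
    match n, m with
    | 1, 1 =>
      left
      refine ⟨rfl, fun j hj1 hj2 => ?_⟩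
      have hj : j = 1 := by omega
      subst hj
      simpa [den] using h1
    | 1, m + 2 =>
      -- den b (m+1) = den a 0 = 1, force m = 0
      have h2' : den b (m + 1) = 1 := by simpa [den] using h2.symm
      have hm0 : m = 0 := by
        by_contra hc
        have := den_two_le b (m + 2) hb (m + 1) (by omega) (by omega)
        omega
      subst hm0
      right; left
      have hb1 : b 1 = 1 := by simpa [den] using h2'
      have h1' : a 1 = b 2 * b 1 + 1 := by simpa [den] using h1
      have hb2 : 1 ≤ b 2 := hb 2 (by omega) le_rfl
      have h1'' : a 1 = b 2 + 1 := by rw [hb1] at h1'; linarith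
      refine ⟨rfl, by omega, hb1, by omega, fun j hj1 hj2 => by omega⟩
    | n + 2, 1 =>
      have h2' : den a (n + 1) = 1 := by simpa [den] using h2
      have hn0 : n = 0 := by
        by_contra hc
        have := den_two_le a (n + 2) ha (n + 1) (by omega) (by omega)
        omega
      subst hn0
      right; right
      have ha1 : a 1 = 1 := by simpa [den] using h2'
      have h1' : a 2 * a 1 + 1 = b 1 := by simpa [den] using h1
      have ha2 : 1 ≤ a 2 := ha 2 (by omega) le_rfl
      have h1'' : a 2 + 1 = b 1 := by rw [ha1] at h1'; linarith
      refine ⟨rfl, by omega, ha1, by omega, fun j hj1 hj2 => by omega⟩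
    | n + 2, m + 2 =>
      -- key step
      have hq : den a (n + 1) = den b (m + 1) := h2
      have hq1 : 1 ≤ den a (n + 1) := den_pos a (n + 2) ha (n + 1) (by omega)
      have hx1 : 1 ≤ den a n := den_pos a (n + 2) ha n (by omega)
      have hx2 : den a n ≤ den a (n + 1) := den_mono a (n + 2) ha n (by omega)
      have hy1 : 1 ≤ den b m := den_pos b (m + 2) hb m (by omega)
      have hy2 : den b m ≤ den b (m + 1) := den_mono b (m + 2) hb m (by omega)
      have heq : a (n + 2) * den a (n + 1) + den a n
          = b (m + 2) * den a (n + 1) + den b m := by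
        have := h1
        simp only [den] at this
        rw [hq]; rw [hq] at this; exact this
      have hAB : a (n + 2) = b (m + 2) := by
        rcases lt_trichotomy (a (n + 2)) (b (m + 2)) with h | h | h
        · exfalso
          have hmul : (a (n + 2) + 1) * den a (n + 1) ≤ b (m + 2) * den a (n + 1) :=
            mul_le_mul_of_nonneg_right (by omega) (by linarith)
          rw [← hq] at hy2
          nlinarith
        · exact h
        · exfalso
          have hmul : (b (m + 2) + 1) * den a (n + 1) ≤ a (n + 2) * den a (n + 1) :=
            mul_le_mul_of_nonneg_right (by omega) (by linarith)
          rw [← hq] at hy2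
          nlinarith
      have hxy : den a n = den b m := by
        rw [hAB] at heq; linarith
      -- apply IH at (n+1, m+1)
      have key := IH (n + 1) (by omega) (m + 1)
        (fun i hi1 hi2 => ha i hi1 (by omega)) (fun i hi1 hi2 => hb i hi1 (by omega))
        (by omega) (by omega) hq (by simpa using hxy)
      rcases key with ⟨hmn, hj⟩ | ⟨hmn, ha1, hb1, hb2, hj⟩ | ⟨hmn, hb1', ha1, ha2, hj⟩
      · left
        have hmn' : m = n := by omega
        refine ⟨by omega, fun j hj1 hj2 => ?_⟩
        rcases Nat.lt_or_ge j (n + 2) with h | h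
        · exact hj j hj1 (by omega)
        · obtain rfl : j = n + 2 := by omega
          rw [hAB, hmn']
      · right; left
        have hmn' : m = n + 1 := by omega
        refine ⟨by omega, ha1, hb1, hb2, fun j hj1 hj2 => ?_⟩
        rcases Nat.lt_or_ge j (n + 2) with h | h
        · exact hj j hj1 (by omega)
        · obtain rfl : j = n + 2 := by omega
          rw [show n + 2 + 1 = m + 2 from by omega]
          exact hAB.symm
      · right; right
        have hmn' : n = m + 1 := by omega
        refine ⟨by omega, hb1', ha1, ha2, fun j hj1 hj2 => ?_⟩
        rcases Nat.lt_or_ge j (m + 2) with h | h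
        · exact hj j hj1 (by omega)
        · obtain rfl : j = m + 2 := by omega
          rw [show m + 2 + 1 = n + 2 from by omega]
          exact hAB
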